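/- Under Assumption ε-small (every pair weight V_{{i,j}} is at most ε times the minimum of v₀ and all singleton weights V_{{k}}), for every set C ⊆ W: R₂(C) − R_MNL(C) ≤ 2ε|C|·R_MNL(C), i.e., R₂(C) ≤ (1 + 2ε|C|)·R_MNL(C). -/

import Mathlib

open Finset

/-- Under the ε-small pair weight assumption, the BundleMVL-2 revenue is not much larger than
the MNL revenue: R₂(C) − R_MNL(C) ≤ 2ε|C|·R_MNL(C), i.e. R₂(C) ≤ (1+2ε|C|)·R_MNL(C). -/
theorem bundle_upper_bound_by_mnl {ι : Type*} [LinearOrder ι]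
    (W : Finset ι) (r V1 : ι → ℝ) (V2 : ι → ι → ℝ) (v0 ε : ℝ)
    (hv0 : 0 < v0) (hε : 0 < ε)
    (hr : ∀ i ∈ W, 0 < r i)
    (hV1 : ∀ i ∈ W, 0 < V1 i)
    (hV2nn : ∀ i j, 0 ≤ V2 i j)
    (hV2symm : ∀ i j, V2 i j = V2 j i)
    (hsmall : ∀ i ∈ W, ∀ j ∈ W, i ≠ j → V2 i j ≤ ε * v0 ∧ ∀ k ∈ W, V2 i j ≤ ε * V1 k)
    (RMNL R2 : Finset ι → ℝ)
    (hRMNL : ∀ C, RMNL C = (∑ i ∈ C, V1 i * r i) / (v0 + ∑ i ∈ C, V1 i))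
    (hR2 : ∀ C, R2 C =
      ((∑ i ∈ C, V1 i * r i) + ∑ i ∈ C, ∑ j ∈ C.filter (fun j => i < j), V2 i j * (r i + r j)) /
      (v0 + (∑ i ∈ C, V1 i) + ∑ i ∈ C, ∑ j ∈ C.filter (fun j => i < j), V2 i j))
    (C : Finset ι) (hC : C ⊆ W) :
    R2 C - RMNL C ≤ (2 * ε * C.card) * RMNL C ∧
    R2 C ≤ (1 + 2 * ε * C.card) * RMNL C := by
  set N := ∑ i ∈ C, V1 i * r i with hN
  set D := v0 + ∑ i ∈ C, V1 i with hD
  have hNnn : 0 ≤ N := Finset.sum_nonneg fun i hi => by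
    have h1 := hV1 i (hC hi); have h2 := hr i (hC hi); positivity
  have hDpos : 0 < D := by
    have : 0 ≤ ∑ i ∈ C, V1 i := Finset.sum_nonneg fun i hi => (hV1 i (hC hi)).le
    rw [hD]; linarith
  have hQnn : 0 ≤ ∑ i ∈ C, ∑ j ∈ C.filter (fun j => i < j), V2 i j :=
    Finset.sum_nonneg fun i _ => Finset.sum_nonneg fun j _ => hV2nn i j
  have hP : (∑ i ∈ C, ∑ j ∈ C.filter (fun j => i < j), V2 i j * (r i + r j))
      ≤ ε * (2 * C.card * N) := by
    calc ∑ i ∈ C, ∑ j ∈ C.filter (fun j => i < j), V2 i j * (r i + r j)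
        ≤ ∑ i ∈ C, ∑ j ∈ C.filter (fun j => i < j), ε * (V1 i * r i + V1 j * r j) := by
          apply Finset.sum_le_sum; intro i hi
          apply Finset.sum_le_sum; intro j hj
          obtain ⟨hjC, hij⟩ := Finset.mem_filter.mp hj
          obtain ⟨_, h2⟩ := hsmall i (hC hi) j (hC hjC) (ne_of_lt hij)
          have hi' := h2 i (hC hi)
          have hj' := h2 j (hC hjC)
          have hri := hr i (hC hi); have hrj := hr j (hC hjC)
          nlinarith [hV2nn i j]
      _ ≤ ∑ i ∈ C, ∑ j ∈ C, ε * (V1 i * r i + V1 j * r j) := by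
          apply Finset.sum_le_sum; intro i hi
          apply Finset.sum_le_sum_of_subset_of_nonneg (Finset.filter_subset _ _)
          intro j hj _
          have h1 := hr j (hC hj); have h2 := hV1 j (hC hj)
          have h3 := hr i (hC hi); have h4 := hV1 i (hC hi)
          positivity
      _ = ε * (2 * C.card * N) := by
          simp only [Finset.mul_sum, Finset.sum_add_distrib, Finset.sum_const,
            nsmul_eq_mul, ← Finset.sum_mul, ← Finset.mul_sum, hN]
          ring
  have key : R2 C ≤ (1 + 2 * ε * C.card) * RMNL C := by
    rw [hR2, hRMNL]
    have h1 : (N + ∑ i ∈ C, ∑ j ∈ C.filter (fun j => i < j), V2 i j * (r i + r j)) /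
        (D + ∑ i ∈ C, ∑ j ∈ C.filter (fun j => i < j), V2 i j)
        ≤ (N + ε * (2 * C.card * N)) / D := by
      apply div_le_div₀ (by positivity) (by linarith) hDpos (by linarith)
    calc (N + ∑ i ∈ C, ∑ j ∈ C.filter (fun j => i < j), V2 i j * (r i + r j)) /
        (D + ∑ i ∈ C, ∑ j ∈ C.filter (fun j => i < j), V2 i j)
        ≤ (N + ε * (2 * C.card * N)) / D := h1
      _ = (1 + 2 * ε * C.card) * (N / D) := by field_simp
  refine ⟨?_, key⟩
  nlinarith [key]
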